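/- arXiv:1510.07128 — 3 statements merged into one kernel-verified Lean document; each statement's English description precedes it below -/
import Mathlib

section
/- Laufer's algorithm terminates and computes Z_min: let Γ be a connected negative definite plumbing tree. Define a sequence l_0 = Σ_v E_v, and inductively, if there exists a vertex v with (l_i, E_v) > 0, set l_{i+1} = l_i + E_v for some such v; otherwise stop. Then this process stops after finitely many steps, and the final cycle l_t satisfies (l_t, E_v) ≤ 0 for all v and equals Z_min (independently of the choices made). -/
open Matrix BigOperators

/-- Intersection matrix of a graph with adjacency relation `A` and integer decorations `e`. -/
def imatZ {V : Type} [Fintype V] [DecidableEq V] (A : V → V → Prop) [DecidableRel A]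
    (e : V → ℤ) : Matrix V V ℤ :=
  fun v w => if v = w then e v else if A v w then 1 else 0

/-- Negative definiteness of an integer matrix (as a quadratic form over ℚ). -/
def NegDefZ {V : Type} [Fintype V] (M : Matrix V V ℤ) : Prop :=
  ∀ x : V → ℚ, x ≠ 0 → ∑ v, ∑ w, x v * (M v w : ℚ) * x w < 0

/-- The pairing `(Z, E_v)` of a cycle `Z` with the base element `E_v`. -/
def pairZ {V : Type} [Fintype V] (M : Matrix V V ℤ) (Z : V → ℤ) (v : V) : ℤ :=
  ∑ w, M v w * Z w

/-- `Z` is Artin's minimal (fundamental) cycle: effective, nonzero, `(Z,E_v) ≤ 0` for all `v`,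
and componentwise minimal among all such cycles. -/
def IsZmin {V : Type} [Fintype V] (M : Matrix V V ℤ) (Z : V → ℤ) : Prop :=
  (∀ v, 0 ≤ Z v) ∧ Z ≠ 0 ∧ (∀ v, pairZ M Z v ≤ 0) ∧
    ∀ Z' : V → ℤ, ((∀ v, 0 ≤ Z' v) ∧ Z' ≠ 0 ∧ (∀ v, pairZ M Z' v ≤ 0)) → ∀ v, Z v ≤ Z' v

/-- `K` is the canonical cycle: `(K + E_v, E_v) + 2 = 0` for all `v`. -/
def IsCanonical {V : Type} [Fintype V] (M : Matrix V V ℤ) (K : V → ℚ) : Prop :=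
  ∀ v, (∑ w, (M v w : ℚ) * K w) = -2 - (M v v : ℚ)

/-- The Riemann--Roch expression `χ(l) = -(K + l, l)/2`. -/
def chi {V : Type} [Fintype V] (M : Matrix V V ℤ) (K : V → ℚ) (l : V → ℚ) : ℚ :=
  -(∑ v, ∑ w, (K v + l v) * (M v w : ℚ) * l w) / 2

/-- Artin's rationality criterion: `χ(Z_min) ≥ 1`. -/
def IsRationalGraph {V : Type} [Fintype V] (M : Matrix V V ℤ) : Prop :=
  ∀ (Z : V → ℤ) (K : V → ℚ), IsZmin M Z → IsCanonical M K →
    1 ≤ chi M K (fun v => (Z v : ℚ))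

section Aux

variable {V : Type} [Fintype V] [DecidableEq V]
  (G : SimpleGraph V) [DecidableRel G.Adj] (e : V → ℤ)

lemma imat_offdiag_nonneg {v w : V} (h : v ≠ w) : 0 ≤ imatZ G.Adj e v w := by
  simp only [imatZ, if_neg h]
  split <;> norm_num

lemma imat_adj {v w : V} (h : G.Adj v w) : imatZ G.Adj e v w = 1 := by
  simp only [imatZ, if_neg (G.ne_of_adj h), if_pos h]

/-- Any effective nonzero anti-nef cycle on a connected graph has all coefficients ≥ 1. -/
lemma lemA (hconn : G.Connected) (Z : V → ℤ) (h0 : ∀ v, 0 ≤ Z v) (hne : Z ≠ 0)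
    (hanti : ∀ v, pairZ (imatZ G.Adj e) Z v ≤ 0) : ∀ v, 1 ≤ Z v := by
  have key : ∀ v w, G.Adj v w → 1 ≤ Z v → 1 ≤ Z w := by
    intro v w hadj hv
    by_contra hw
    have hw0 : Z w = 0 := le_antisymm (by omega) (h0 w)
    have hpos : 0 < pairZ (imatZ G.Adj e) Z w := by
      simp only [pairZ]
      apply Finset.sum_pos'
      · intro u _
        rcases eq_or_ne u w with rfl | hu
        · simp [imatZ, hw0]
        · exact mul_nonneg (imat_offdiag_nonneg G e (Ne.symm hu)) (h0 u)
      · refine ⟨v, Finset.mem_univ v, ?_⟩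
        rw [imat_adj G e hadj.symm, one_mul]
        omega
    have := hanti w
    omega
  obtain ⟨v0, hv0ne⟩ := Function.ne_iff.mp hne
  simp only [Pi.zero_apply] at hv0ne
  have hv0 : 1 ≤ Z v0 := by have := h0 v0; omega
  have walk : ∀ (a b : V) (_ : G.Walk a b), 1 ≤ Z a → 1 ≤ Z b := by
    intro a b p
    induction p with
    | nil => exact id
    | cons h _ ih => exact fun ha => ih (key _ _ h ha)
  intro v
  obtain ⟨p⟩ := hconn v0 v
  exact walk v0 v p hv0

/-- If `c ≤ Z` componentwise, `Z` is anti-nef, and `(c, E_v) > 0`, then `c v + 1 ≤ Z v`. -/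
lemma stepB (Z c : V → ℤ) (hanti : ∀ v, pairZ (imatZ G.Adj e) Z v ≤ 0)
    (hle : ∀ w, c w ≤ Z w) (v : V) (hpos : 0 < pairZ (imatZ G.Adj e) c v) :
    c v + 1 ≤ Z v := by
  rcases lt_or_ge (c v) (Z v) with h | h
  · omega
  · exfalso
    have hv : c v = Z v := le_antisymm (hle v) h
    have hcp : pairZ (imatZ G.Adj e) c v ≤ pairZ (imatZ G.Adj e) Z v := by
      simp only [pairZ]
      apply Finset.sum_le_sum
      intro w _
      rcases eq_or_ne w v with rfl | hw
      · rw [hv]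
      · exact mul_le_mul_of_nonneg_left (hle w) (imat_offdiag_nonneg G e (Ne.symm hw))
    have := hanti v
    omega

/-- The invariant of Laufer's algorithm: as long as steps are performed, the cycle stays
`≥ 1`, stays `≤ Z` for any anti-nef `Z ≥ 1`, and its total degree grows by one each step. -/
lemma invLemma (Z : V → ℤ) (hanti : ∀ v, pairZ (imatZ G.Adj e) Z v ≤ 0)
    (hge1 : ∀ v, 1 ≤ Z v) (l : ℕ → V → ℤ) (h0 : l 0 = fun _ => 1)
    (hstep : ∀ i : ℕ, (∃ v, 0 < pairZ (imatZ G.Adj e) (l i) v) →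
      ∃ v, 0 < pairZ (imatZ G.Adj e) (l i) v ∧
        l (i + 1) = fun w => l i w + (if w = v then 1 else 0)) :
    ∀ i : ℕ, (∀ j, j < i → ∃ v, 0 < pairZ (imatZ G.Adj e) (l j) v) →
      (∀ v, 1 ≤ l i v) ∧ (∀ v, l i v ≤ Z v) ∧
      (∑ v, l i v = Fintype.card V + i) := by
  intro i
  induction i with
  | zero =>
    intro _
    refine ⟨?_, ?_, ?_⟩ <;> simp [h0, hge1, Finset.card_univ]
  | succ n ih =>
    intro hj
    obtain ⟨h1, h2, h3⟩ := ih (fun j hj' => hj j (Nat.lt_succ_of_lt hj'))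
    obtain ⟨v, hv, heq⟩ := hstep n (hj n (Nat.lt_succ_self n))
    refine ⟨?_, ?_, ?_⟩
    · intro w
      simp only [heq]
      have := h1 w
      split <;> omega
    · intro w
      simp only [heq]
      rcases eq_or_ne w v with rfl | hw
      · simpa using stepB G e Z (l n) hanti h2 w hv
      · simpa [hw] using h2 w
    · simp only [heq]
      rw [Finset.sum_add_distrib, h3, Finset.sum_ite_eq' Finset.univ v (fun _ => (1 : ℤ))]
      simp
      ring

/-- Negative definiteness yields an effective nonzero anti-nef cycle. -/
lemma lemE [Nonempty V] (hneg : NegDefZ (imatZ G.Adj e)) :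
    ∃ Z : V → ℤ, (∀ v, 0 ≤ Z v) ∧ Z ≠ 0 ∧ ∀ v, pairZ (imatZ G.Adj e) Z v ≤ 0 := by
  classical
  set M := imatZ G.Adj e with hM
  set Mq : Matrix V V ℚ := M.map (Int.cast) with hMq
  have hform : ∀ x : V → ℚ, ∑ v, x v * Mq.mulVec x v = ∑ v, ∑ w, x v * (M v w : ℚ) * x w := by
    intro x
    refine Finset.sum_congr rfl fun v _ => ?_
    simp [Matrix.mulVec, dotProduct, Finset.mul_sum, hMq, Matrix.map_apply, mul_assoc]
  have hdet : Mq.det ≠ 0 := by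
    intro hdet0
    obtain ⟨x, hx0, hx⟩ := Matrix.exists_mulVec_eq_zero_iff.mpr hdet0
    have hlt := hneg x hx0
    rw [← hform x] at hlt
    simp [hx] at hlt
  have hU : IsUnit Mq.det := isUnit_iff_ne_zero.mpr hdet
  set y : V → ℚ := Mq⁻¹.mulVec (fun _ => -1) with hy
  have hMy : Mq.mulVec y = fun _ => -1 := by
    rw [hy, Matrix.mulVec_mulVec, Matrix.mul_nonsing_inv _ hU, Matrix.one_mulVec]
  have hMqnn : ∀ v w : V, v ≠ w → 0 ≤ Mq v w := by
    intro v w h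
    simp only [hMq, Matrix.map_apply]
    exact_mod_cast imat_offdiag_nonneg G e h
  -- nonnegativity of y
  have hynn : ∀ v, 0 ≤ y v := by
    by_contra hb
    push_neg at hb
    obtain ⟨v0, hv0⟩ := hb
    set a : V → ℚ := fun v => max (y v) 0 with ha
    set b : V → ℚ := fun v => max (-(y v)) 0 with hbdef
    have hbnn : ∀ v, 0 ≤ b v := fun v => le_max_right _ _
    have hann : ∀ v, 0 ≤ a v := fun v => le_max_right _ _
    have hab : ∀ v, a v - b v = y v := by
      intro v
      rcases le_total (y v) 0 with h | h
      · rw [ha, hbdef]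
        simp only [max_eq_right h, max_eq_left (by linarith : 0 ≤ -(y v))]
        ring
      · rw [ha, hbdef]
        simp only [max_eq_left h, max_eq_right (by linarith : -(y v) ≤ 0)]
        ring
    have habz : ∀ v, b v * a v = 0 := by
      intro v
      rcases le_total (y v) 0 with h | h
      · rw [ha]; simp [max_eq_right h]
      · rw [hbdef]; simp [max_eq_right (by linarith : -(y v) ≤ 0)]
    have hbne : b ≠ 0 := by
      intro h
      have hbv := congrFun h v0
      simp only [hbdef, Pi.zero_apply] at hbv
      have : -(y v0) ≤ 0 := max_eq_right_iff.mp hbv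
      linarith
    have hA := hneg b hbne
    -- T y = T a - T b
    have hTy : ∑ v, ∑ w, b v * (M v w : ℚ) * y w = - ∑ v, b v := by
      have : ∀ v, ∑ w, b v * (M v w : ℚ) * y w = b v * Mq.mulVec y v := by
        intro v
        simp [Matrix.mulVec, dotProduct, Finset.mul_sum, hMq, Matrix.map_apply,
          mul_assoc]
      rw [Finset.sum_congr rfl fun v _ => this v]
      rw [hMy]
      simp
    have hsplit : ∑ v, ∑ w, b v * (M v w : ℚ) * y w =
        (∑ v, ∑ w, b v * (M v w : ℚ) * a w) - ∑ v, ∑ w, b v * (M v w : ℚ) * b w := by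
      rw [← Finset.sum_sub_distrib]
      refine Finset.sum_congr rfl fun v _ => ?_
      rw [← Finset.sum_sub_distrib]
      refine Finset.sum_congr rfl fun w _ => ?_
      rw [← hab w]; ring
    have hTa : 0 ≤ ∑ v, ∑ w, b v * (M v w : ℚ) * a w := by
      apply Finset.sum_nonneg
      intro v _
      apply Finset.sum_nonneg
      intro w _
      rcases eq_or_ne v w with rfl | hvw
      · have : b v * (M v v : ℚ) * a v = (M v v : ℚ) * (b v * a v) := by ring
        rw [this, habz v, mul_zero]
      · have : (0:ℚ) ≤ (M v w : ℚ) := by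
          have := hMqnn v w hvw
          simpa [hMq, Matrix.map_apply] using this
        exact mul_nonneg (mul_nonneg (hbnn v) this) (hann w)
    have hbsum : 0 ≤ ∑ v, b v := Finset.sum_nonneg fun v _ => hbnn v
    -- hence T b ≥ 0, contradicting negative definiteness
    have : (0:ℚ) ≤ ∑ v, ∑ w, b v * (M v w : ℚ) * b w := by
      have := hsplit
      rw [hTy] at this
      linarith
    linarith
  have hyne : y ≠ 0 := by
    intro h
    have := congrFun hMy (Classical.arbitrary V)
    rw [h] at this
    simp at this
  -- clear denominators
  set N : ℕ := ∏ v, (y v).den with hN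
  have hNpos : 0 < N := Finset.prod_pos fun v _ => (y v).pos
  set Z : V → ℤ := fun v => ((N / (y v).den : ℕ) : ℤ) * (y v).num with hZ
  have hcast : ∀ v, ((Z v : ℤ) : ℚ) = (N : ℚ) * y v := by
    intro v
    have hd : (y v).den ∣ N := Finset.dvd_prod_of_mem _ (Finset.mem_univ v)
    have hden : ((y v).den : ℚ) ≠ 0 := Nat.cast_ne_zero.mpr (y v).den_nz
    have h1 : ((y v).num : ℚ) = y v * ((y v).den : ℚ) := (Rat.mul_den_eq_num (y v)).symm
    simp only [hZ]
    rw [Int.cast_mul, Int.cast_natCast, Nat.cast_div hd hden, h1]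
    field_simp
  refine ⟨Z, ?_, ?_, ?_⟩
  · intro v
    have h1 : (0:ℚ) ≤ (N : ℚ) * y v :=
      mul_nonneg (by positivity) (hynn v)
    rw [← hcast v] at h1
    exact_mod_cast h1
  · intro h
    obtain ⟨v, hv⟩ := Function.ne_iff.mp hyne
    have : Z v = 0 := congrFun h v
    have h2 : ((Z v : ℤ) : ℚ) = 0 := by rw [this]; simp
    rw [hcast v] at h2
    rcases mul_eq_zero.mp h2 with h3 | h3
    · exact absurd h3 (by positivity)
    · exact hv h3
  · intro v
    have h1 : ((pairZ M Z v : ℤ) : ℚ) = (N : ℚ) * Mq.mulVec y v := by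
      simp only [pairZ]
      push_cast
      rw [Finset.sum_congr rfl fun w _ => by rw [hcast w]]
      simp only [Matrix.mulVec, dotProduct, hMq, Matrix.map_apply, Finset.mul_sum]
      refine Finset.sum_congr rfl fun w _ => ?_
      ring
    have h2 : ((pairZ M Z v : ℤ) : ℚ) = -(N:ℚ) := by
      rw [h1, hMy]
      simp
    have h3 : ((pairZ M Z v : ℤ) : ℚ) ≤ 0 := by
      rw [h2]
      simp [Nat.cast_nonneg]
    exact_mod_cast h3

end Aux

/-- Laufer's algorithm terminates and computes `Z_min`:
any sequence starting from `l_0 = Σ_v E_v`, which at each step adds `E_v`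
for some `v` with `(l_i, E_v) > 0` as long as such a vertex exists,
reaches after finitely many steps a cycle `l_t` with `(l_t, E_v) ≤ 0` for all `v`,
and this cycle is Artin's minimal cycle `Z_min` (independently of the choices). -/
theorem laufer_algorithm {V : Type} [Fintype V] [DecidableEq V] [Nonempty V]
    (G : SimpleGraph V) [DecidableRel G.Adj] (e : V → ℤ)
    (htree : G.IsTree) (hneg : NegDefZ (imatZ G.Adj e))
    (l : ℕ → V → ℤ)
    (h0 : l 0 = fun _ => 1)
    (hstep : ∀ i : ℕ, (∃ v, 0 < pairZ (imatZ G.Adj e) (l i) v) →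
      ∃ v, 0 < pairZ (imatZ G.Adj e) (l i) v ∧
        l (i + 1) = fun w => l i w + (if w = v then 1 else 0)) :
    ∃ t : ℕ, (∀ v, pairZ (imatZ G.Adj e) (l t) v ≤ 0) ∧ IsZmin (imatZ G.Adj e) (l t) := by
  classical
  obtain ⟨Z1, hZ1nn, hZ1ne, hZ1anti⟩ := lemE G e hneg
  have hZ1ge := lemA G e htree.isConnected Z1 hZ1nn hZ1ne hZ1anti
  have hex : ∃ t, ∀ v, pairZ (imatZ G.Adj e) (l t) v ≤ 0 := by
    by_contra hno
    push_neg at hno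
    have hbound : ∀ i : ℕ, (Fintype.card V : ℤ) + i ≤ ∑ v, Z1 v := by
      intro i
      obtain ⟨_, h2, h3⟩ := invLemma G e Z1 hZ1anti hZ1ge l h0 hstep i (fun j _ => hno j)
      calc (Fintype.card V : ℤ) + i = ∑ v, l i v := h3.symm
        _ ≤ ∑ v, Z1 v := Finset.sum_le_sum fun v _ => h2 v
    have hcard : 0 < Fintype.card V := Fintype.card_pos
    have hb := hbound (∑ v, Z1 v).toNat
    have hs := Int.self_le_toNat (∑ v, Z1 v)
    omega
  set t := Nat.find hex with ht
  have hQt := Nat.find_spec hex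
  have hjj : ∀ j, j < t → ∃ v, 0 < pairZ (imatZ G.Adj e) (l j) v := by
    intro j hj
    have hmin := Nat.find_min hex hj
    push_neg at hmin
    obtain ⟨v, hv⟩ := hmin
    exact ⟨v, hv⟩
  obtain ⟨h1, _, _⟩ := invLemma G e Z1 hZ1anti hZ1ge l h0 hstep t hjj
  refine ⟨t, hQt, ?_, ?_, hQt, ?_⟩
  · intro v
    have := h1 v
    omega
  · intro h
    have hv := h1 (Classical.arbitrary V)
    rw [h] at hv
    simp at hv
  · rintro Z' ⟨hZ'nn, hZ'ne, hZ'anti⟩ v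
    have hge := lemA G e htree.isConnected Z' hZ'nn hZ'ne hZ'anti
    exact (invLemma G e Z' hZ'anti hge l h0 hstep t hjj).2.1 v
end

section
/- With notation as in Lemma 2.5 of the paper: Γ a connected negative definite plumbing tree, e = (v,w) an edge with components Γ_v, Γ_w of Γ∖e, and r := -det(Γ_w∖w)/det(Γ_w). Let Γ_v(1/r) be Γ_v with a new vertex of decoration 1/r attached to v. Then det(Γ_v(1/r)) = det(Γ)/det(Γ_w∖w), and in particular det(Γ_v(1/r)) > 0. -/
open Matrix BigOperators

/-- Intersection matrix of a graph with adjacency relation `A` and rational decorations `e`. -/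
def imatQ {V : Type} [Fintype V] [DecidableEq V] (A : V → V → Prop) [DecidableRel A]
    (e : V → ℚ) : Matrix V V ℚ :=
  fun v w => if v = w then e v else if A v w then 1 else 0

/-- A matrix is negative definite. -/
def NegDefQ {V : Type} [Fintype V] (M : Matrix V V ℚ) : Prop :=
  ∀ x : V → ℚ, x ≠ 0 → ∑ v, ∑ w, x v * M v w * x w < 0

/-- The intersection matrix of the graph `Γ` obtained by joining two decorated graphs
(with matrices `I₁`, `I₂`) by a single new edge connecting `v ∈ Γ_v` to `w ∈ Γ_w`. -/
def joinMat {V₁ V₂ : Type} [Fintype V₁] [DecidableEq V₁] [Fintype V₂] [DecidableEq V₂]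
    (I₁ : Matrix V₁ V₁ ℚ) (I₂ : Matrix V₂ V₂ ℚ) (v : V₁) (w : V₂) :
    Matrix (V₁ ⊕ V₂) (V₁ ⊕ V₂) ℚ :=
  fun x y =>
    match x, y with
    | Sum.inl a, Sum.inl b => I₁ a b
    | Sum.inr a, Sum.inr b => I₂ a b
    | Sum.inl a, Sum.inr b => if a = v ∧ b = w then 1 else 0
    | Sum.inr a, Sum.inl b => if a = w ∧ b = v then 1 else 0

/-- The intersection matrix of the graph obtained by attaching one new vertex with
decoration `r` by a single edge to the vertex `w`. -/
def attachMat {V : Type} [Fintype V] [DecidableEq V] (I : Matrix V V ℚ) (w : V) (r : ℚ) :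
    Matrix (Option V) (Option V) ℚ :=
  fun x y =>
    match x, y with
    | some a, some b => I a b
    | none, none => r
    | some a, none => if a = w then 1 else 0
    | none, some b => if b = w then 1 else 0

/-- The intersection matrix of the full subgraph obtained by deleting the vertex `w`. -/
def delVertMat {V : Type} [Fintype V] [DecidableEq V] (I : Matrix V V ℚ) (w : V) :
    Matrix {u : V // u ≠ w} {u : V // u ≠ w} ℚ :=
  I.submatrix Subtype.val Subtype.val

/-- `det(Γ) := det(-I(Γ))`. -/
def detG {V : Type} [Fintype V] [DecidableEq V] (I : Matrix V V ℚ) : ℚ := (-I).det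

lemma sum_split {V : Type} [Fintype V] [DecidableEq V] (a : V) (f : V → ℚ) :
    ∑ u, f u = f a + ∑ u : {u : V // u ≠ a}, f u.val := by
  haveI : Unique {u : V // u = a} := ⟨⟨⟨a, rfl⟩⟩, fun x => Subtype.ext x.2⟩
  rw [← (Equiv.sumCompl (· = a)).sum_comp f, Fintype.sum_sum_type]
  congr 1
  · rw [Fintype.sum_unique, Equiv.sumCompl_apply_inl]
    exact congrArg f (default : {u : V // u = a}).2

lemma cofactor_lemma {V : Type} [Fintype V] [DecidableEq V] (M : Matrix V V ℚ) (a : V) :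
    (M.updateRow a (Pi.single a 1)).det = (delVertMat M a).det := by
  haveI : Unique {u : V // u = a} := ⟨⟨⟨a, rfl⟩⟩, fun x => Subtype.ext x.2⟩
  set e := Equiv.sumCompl (fun u : V => u = a)
  rw [← det_submatrix_equiv_self e]
  have : (M.updateRow a (Pi.single a 1)).submatrix e e =
      fromBlocks (fun _ _ => 1) 0 (fun i _ => M i.val a) (delVertMat M a) := by
    ext i j
    rcases i with i | i <;> rcases j with j | j
    · have hi : (i : V) = a := i.2
      have hj : (j : V) = a := j.2
      simp [e, Equiv.sumCompl, submatrix, fromBlocks, hi, hj, updateRow_apply,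
        Pi.single_apply]
    · have hi : (i : V) = a := i.2
      have hj : (j : V) ≠ a := j.2
      simp [e, Equiv.sumCompl, submatrix, fromBlocks, hi, hj, updateRow_apply,
        Pi.single_apply]
    · have hi : (i : V) ≠ a := i.2
      simp [e, Equiv.sumCompl, submatrix, fromBlocks, hi, updateRow_apply, delVertMat]
      rw [show (j : V) = a from j.2]
    · have hi : (i : V) ≠ a := i.2
      simp [e, Equiv.sumCompl, submatrix, fromBlocks, hi, updateRow_apply, delVertMat]
  rw [this]
  exact (det_fromBlocks_zero₁₂ _ _ _).trans (by convert one_mul ((delVertMat M a).det) using 2; exact det_unique _)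

lemma rankone_lemma {V : Type} [Fintype V] [DecidableEq V] (M : Matrix V V ℚ) (a : V) (c : ℚ) :
    (M + c • (Matrix.of fun i j => (if i = a then (1:ℚ) else 0) * (if j = a then 1 else 0))).det
      = M.det + c * (delVertMat M a).det := by
  have h : (M + c • (Matrix.of fun i j => (if i = a then (1:ℚ) else 0) * (if j = a then 1 else 0)))
      = M.updateRow a (M a + c • (Pi.single a 1 : V → ℚ)) := by
    ext i j
    by_cases hi : i = a
    · subst hi
      simp [updateRow_apply, Pi.single_apply, mul_comm]
    · simp [updateRow_apply, hi]
  rw [h, det_updateRow_add, det_updateRow_smul, updateRow_eq_self, cofactor_lemma]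

lemma delVert_neg {V : Type} [Fintype V] [DecidableEq V] (M : Matrix V V ℚ) (a : V) :
    delVertMat (-M) a = -(delVertMat M a) := rfl

lemma det_attach {V : Type} [Fintype V] [DecidableEq V] (N : Matrix V V ℚ) (v : V) (x : ℚ)
    (hx : x ≠ 0) :
    detG (attachMat N v x) = (-x) * detG N - detG (delVertMat N v) := by
  set e : V ⊕ PUnit.{1} ≃ Option V := (Equiv.optionEquivSumPUnit V).symm
  rw [detG, ← det_submatrix_equiv_self e]
  set B : Matrix V PUnit.{1} ℚ := Matrix.of fun i _ => -(if i = v then (1:ℚ) else 0)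
  set C : Matrix PUnit.{1} V ℚ := Matrix.of fun _ j => -(if j = v then (1:ℚ) else 0)
  set D : Matrix PUnit.{1} PUnit.{1} ℚ := Matrix.of fun _ _ => -x
  have hsub : (-(attachMat N v x)).submatrix e e = fromBlocks (-N) B C D := by
    ext i j
    rcases i with i | i <;> rcases j with j | j <;>
      simp [e, fromBlocks, submatrix, Equiv.optionEquivSumPUnit_symm_inl,
        Equiv.optionEquivSumPUnit_symm_inr, attachMat, B, C, D]
  rw [hsub]
  letI : Invertible D := ⟨Matrix.of fun _ _ => (-x)⁻¹, by
      ext i j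
      simp [D, mul_apply, one_apply, Subsingleton.elim i j, inv_mul_cancel₀ (neg_ne_zero.mpr hx), inv_mul_cancel₀ hx],
    by
      ext i j
      simp [D, mul_apply, one_apply, Subsingleton.elim i j, mul_inv_cancel₀ (neg_ne_zero.mpr hx), mul_inv_cancel₀ hx]⟩
  rw [det_fromBlocks₂₂]
  have hD : D.det = -x := by simp [D, det_unique]
  have hS : -N - B * ⅟D * C =
      (-N) + x⁻¹ • (Matrix.of fun i j => (if i = v then (1:ℚ) else 0) * (if j = v then 1 else 0)) := by
    ext i j
    simp [B, C, D, mul_apply, Fintype.sum_unique]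
  rw [hS, hD, rankone_lemma, delVert_neg, detG, detG]
  rw [mul_add, ← mul_assoc, show -x * x⁻¹ = -1 by field_simp]
  ring



lemma det_join {V₁ V₂ : Type} [Fintype V₁] [DecidableEq V₁] [Fintype V₂] [DecidableEq V₂]
    (M₁ : Matrix V₁ V₁ ℚ) (M₂ : Matrix V₂ V₂ ℚ) (v : V₁) (w : V₂)
    (hd : detG M₂ ≠ 0) :
    detG (joinMat M₁ M₂ v w) =
      detG M₁ * detG M₂ - detG (delVertMat M₁ v) * detG (delVertMat M₂ w) := by
  have hd' : (-M₂).det ≠ 0 := hd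
  set B : Matrix V₁ V₂ ℚ := Matrix.of fun i j => -(if i = v ∧ j = w then (1:ℚ) else 0) with hB
  set C : Matrix V₂ V₁ ℚ := Matrix.of fun i j => -(if i = w ∧ j = v then (1:ℚ) else 0) with hC
  have hsub : -(joinMat M₁ M₂ v w) = fromBlocks (-M₁) B C (-M₂) := by
    ext i j
    rcases i with i | i <;> rcases j with j | j <;> rfl
  rw [detG, hsub]
  letI : Invertible (-M₂) := invertibleOfIsUnitDet _ (isUnit_iff_ne_zero.mpr hd')
  rw [det_fromBlocks₂₂]
  have hX : ⅟(-M₂) = (-M₂)⁻¹ := invOf_eq_nonsing_inv _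
  set c : ℚ := -((-M₂)⁻¹ w w) with hc
  have hS : -M₁ - B * ⅟(-M₂) * C =
      (-M₁) + c • (Matrix.of fun i j => (if i = v then (1:ℚ) else 0) * (if j = v then 1 else 0)) := by
    rw [hX]
    ext i j
    simp only [Matrix.sub_apply, Matrix.add_apply, Matrix.smul_apply, mul_apply, hB, hC,
      Matrix.of_apply, Matrix.neg_apply, ite_and, neg_mul, mul_neg, neg_neg, mul_ite, ite_mul,
      mul_zero, zero_mul, mul_one, one_mul, smul_eq_mul]
    rcases eq_or_ne i v with h | h <;> rcases eq_or_ne j v with h' | h' <;>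
      simp [h, h', hc, Finset.sum_ite_eq, Finset.sum_ite_eq'] <;> ring
  rw [hS, rankone_lemma, delVert_neg]
  have hadj : (-M₂).det * ((-M₂)⁻¹ w w) = (delVertMat (-M₂) w).det := by
    rw [Matrix.inv_def]
    simp only [Matrix.smul_apply, smul_eq_mul, Ring.inverse_eq_inv']
    rw [← mul_assoc, mul_inv_cancel₀ hd', one_mul, adjugate_apply, cofactor_lemma]
  have expand : (-M₂).det * ((-M₁).det + c * (-delVertMat M₁ v).det)
      = (-M₁).det * (-M₂).det - (-delVertMat M₁ v).det * (-delVertMat M₂ w).det := by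
    rw [hc]
    have : (-delVertMat M₂ w).det = (-M₂).det * ((-M₂)⁻¹ w w) := by
      rw [hadj, delVert_neg]
    rw [this]
    ring
  rw [expand]
  rfl

lemma posdef_det_pos : ∀ (n : ℕ) {V : Type} [Fintype V] [DecidableEq V],
    Fintype.card V = n → ∀ (N : Matrix V V ℚ), (∀ i j, N i j = N j i) →
    (∀ x : V → ℚ, x ≠ 0 → 0 < ∑ i, ∑ j, x i * N i j * x j) → 0 < N.det := by
  intro n
  induction n with
  | zero =>
    intro V _ _ hn N _ _
    haveI := Fintype.card_eq_zero_iff.mp hn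
    simp
  | succ n IH =>
    intro V _ _ hn N hsym hpos
    obtain ⟨a⟩ : Nonempty V := Fintype.card_pos_iff.mp (by omega)
    haveI hU : Unique {u : V // u = a} := ⟨⟨⟨a, rfl⟩⟩, fun x => Subtype.ext x.2⟩
    set α := N a a with hαdef
    have hα : 0 < α := by
      have h := hpos (Pi.single a 1) (by
        intro h
        have := congrFun h a
        simp at this)
      simpa [Pi.single_apply, Finset.sum_ite_eq, ite_mul, mul_ite] using h
    have hα0 : α ≠ 0 := ne_of_gt hα
    set S : Matrix {u : V // u ≠ a} {u : V // u ≠ a} ℚ :=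
      Matrix.of fun i j => N i.val j.val - N i.val a * α⁻¹ * N a j.val with hSdef
    -- S is symmetric
    have hSsym : ∀ i j, S i j = S j i := by
      intro i j
      simp only [hSdef, Matrix.of_apply]
      rw [hsym i.val j.val, hsym i.val a, hsym a j.val]
      ring
    -- S is positive definite
    have hSpos : ∀ x : {u : V // u ≠ a} → ℚ, x ≠ 0 →
        0 < ∑ i, ∑ j, x i * S i j * x j := by
      intro x hx
      set s : ℚ := ∑ j : {u : V // u ≠ a}, N a j.val * x j with hsdef
      set t : ℚ := -(α⁻¹ * s) with htdef
      set y : V → ℚ := fun u => if h : u = a then t else x ⟨u, h⟩ with hydef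
      have hya : y a = t := by simp [hydef]
      have hyv : ∀ i : {u : V // u ≠ a}, y i.val = x i := by
        intro i; simp [hydef, i.2]
      have hy0 : y ≠ 0 := by
        obtain ⟨i, hi⟩ := Function.ne_iff.mp hx
        intro h
        apply hi
        have := congrFun h i.val
        rwa [hyv i] at this
      have hq := hpos y hy0
      set Q : ℚ := ∑ i : {u : V // u ≠ a}, ∑ j : {u : V // u ≠ a},
        x i * N i.val j.val * x j with hQdef
      set s2 : ℚ := ∑ i : {u : V // u ≠ a}, x i * N i.val a with hs2def
      have hs2 : s2 = s := by
        rw [hs2def, hsdef]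
        refine Finset.sum_congr rfl fun i _ => ?_
        rw [hsym i.val a]; ring
      -- expand the quadratic form of N at y
      have hinner : ∀ u : V, (∑ u', y u * N u u' * y u')
          = y u * N u a * t + ∑ j : {u : V // u ≠ a}, y u * N u j.val * x j := by
        intro u
        rw [sum_split a (fun u' => y u * N u u' * y u')]
        congr 1
        · rw [hya]
        · exact Finset.sum_congr rfl fun j _ => by rw [hyv j]
      have hQy : (∑ u, ∑ u', y u * N u u' * y u') = t * α * t + t * s + s2 * t + Q := by
        rw [sum_split a (fun u => ∑ u', y u * N u u' * y u')]
        rw [hinner a]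
        have h1 : ∑ j : {u : V // u ≠ a}, y a * N a j.val * x j = t * s := by
          rw [hya, hsdef, Finset.mul_sum]
          exact Finset.sum_congr rfl fun j _ => by ring
        have h2 : ∀ i : {u : V // u ≠ a}, (∑ u', y i.val * N i.val u' * y u')
            = x i * N i.val a * t + ∑ j : {u : V // u ≠ a}, x i * N i.val j.val * x j := by
          intro i
          rw [hinner i.val, hyv i]
        have h3 : ∑ i : {u : V // u ≠ a}, (∑ u', y i.val * N i.val u' * y u')
            = s2 * t + Q := by
          rw [Finset.sum_congr rfl fun i _ => h2 i, Finset.sum_add_distrib]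
          congr 1
          rw [hs2def, Finset.sum_mul]
        rw [h3, h1, hya]
        ring
      have hQS : (∑ i, ∑ j, x i * S i j * x j) = Q - s2 * α⁻¹ * s := by
        have hterm : ∀ i : {u : V // u ≠ a}, (∑ j, x i * S i j * x j)
            = (∑ j : {u : V // u ≠ a}, x i * N i.val j.val * x j)
              - (x i * N i.val a) * α⁻¹ * s := by
          intro i
          rw [show (∑ j, x i * S i j * x j) = ∑ j : {u : V // u ≠ a},
              (x i * N i.val j.val * x j - (x i * N i.val a) * α⁻¹ * (N a j.val * x j)) from
            Finset.sum_congr rfl fun j _ => by simp only [hSdef, Matrix.of_apply]; ring]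
          rw [Finset.sum_sub_distrib]
          congr 1
          rw [hsdef, Finset.mul_sum]
        rw [Finset.sum_congr rfl fun i _ => hterm i, Finset.sum_sub_distrib, hs2def,
          Finset.sum_mul, Finset.sum_mul]
      have key : t * α * t + t * s + s2 * t + Q = Q - s2 * α⁻¹ * s := by
        rw [hs2, htdef]
        field_simp
        ring
      rw [hQS, ← key]
      rw [hQy] at hq
      exact hq
    -- block decomposition
    set e : {u : V // u = a} ⊕ {u : V // ¬u = a} ≃ V := Equiv.sumCompl (fun u : V => u = a)
      with he
    set A : Matrix {u : V // u = a} {u : V // u = a} ℚ := Matrix.of fun _ _ => α with hA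
    set Bm : Matrix {u : V // u = a} {u : V // ¬u = a} ℚ :=
      Matrix.of fun _ j => N a j.val with hBm
    set Cm : Matrix {u : V // ¬u = a} {u : V // u = a} ℚ :=
      Matrix.of fun i _ => N i.val a with hCm
    set D : Matrix {u : V // ¬u = a} {u : V // ¬u = a} ℚ :=
      Matrix.of fun i j => N i.val j.val with hD
    have hsub : N.submatrix e e = fromBlocks A Bm Cm D := by
      ext i j
      rcases i with i | i <;> rcases j with j | j <;>
        simp only [he, Equiv.sumCompl_apply_inl, Equiv.sumCompl_apply_inr, submatrix_apply,
          fromBlocks_apply₁₁, fromBlocks_apply₁₂, fromBlocks_apply₂₁, fromBlocks_apply₂₂,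
          hA, hBm, hCm, hD, Matrix.of_apply, hαdef]
      · rw [i.2, j.2]
      · rw [i.2]
      · rw [j.2]
    letI : Invertible A := ⟨Matrix.of fun _ _ => α⁻¹, by
        ext i j
        simp [hA, mul_apply, Fintype.sum_unique, one_apply, Subsingleton.elim i j,
          inv_mul_cancel₀ hα0],
      by
        ext i j
        simp [hA, mul_apply, Fintype.sum_unique, one_apply, Subsingleton.elim i j,
          mul_inv_cancel₀ hα0]⟩
    have hdet : N.det = α * S.det := by
      rw [← det_submatrix_equiv_self e, hsub, det_fromBlocks₁₁]
      have h1 : A.det = α := by simp [hA, det_unique]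
      have h2 : D - Cm * ⅟A * Bm = S := by
        ext i j
        simp [hD, hCm, hBm, hA, hSdef, mul_apply, Fintype.sum_unique]
      rw [h1, h2]
    rw [hdet]
    have hcard : Fintype.card {u : V // u ≠ a} = n := by
      have h1 : Fintype.card {u : V // u = a} = 1 := Fintype.card_subtype_eq a
      have := Fintype.card_subtype_compl (fun u : V => u = a)
      rw [h1, hn] at this
      simpa using this
    exact mul_pos hα (IH hcard S hSsym hSpos)

lemma negdef_neg_pos {V : Type} [Fintype V] [DecidableEq V] (M : Matrix V V ℚ)
    (h : NegDefQ M) (x : V → ℚ) (hx : x ≠ 0) :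
    0 < ∑ i, ∑ j, x i * (-M) i j * x j := by
  have := h x hx
  have heq : ∑ i, ∑ j, x i * (-M) i j * x j = -∑ i, ∑ j, x i * M i j * x j := by
    rw [← Finset.sum_neg_distrib]
    refine Finset.sum_congr rfl fun i _ => ?_
    rw [← Finset.sum_neg_distrib]
    refine Finset.sum_congr rfl fun j _ => ?_
    simp only [Matrix.neg_apply]; ring
  rw [heq]
  linarith

lemma negdef_det_pos {V : Type} [Fintype V] [DecidableEq V] (M : Matrix V V ℚ)
    (hsym : ∀ i j, M i j = M j i) (h : NegDefQ M) : 0 < detG M := by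
  refine posdef_det_pos (Fintype.card V) rfl (-M) (fun i j => by simp [hsym i j]) ?_
  exact fun x hx => negdef_neg_pos M h x hx

lemma negdef_inr {V₁ V₂ : Type} [Fintype V₁] [DecidableEq V₁] [Fintype V₂] [DecidableEq V₂]
    (M₁ : Matrix V₁ V₁ ℚ) (M₂ : Matrix V₂ V₂ ℚ) (v : V₁) (w : V₂)
    (h : NegDefQ (joinMat M₁ M₂ v w)) : NegDefQ M₂ := by
  intro x hx
  set y : V₁ ⊕ V₂ → ℚ := Sum.elim 0 x with hy
  have hy0 : y ≠ 0 := by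
    intro h0
    apply hx
    funext i
    exact congrFun h0 (Sum.inr i)
  have := h y hy0
  have heq : ∑ u, ∑ u', y u * joinMat M₁ M₂ v w u u' * y u'
      = ∑ i, ∑ j, x i * M₂ i j * x j := by
    rw [Fintype.sum_sum_type]
    have hL : (∑ a₁ : V₁, ∑ u', y (Sum.inl a₁) * joinMat M₁ M₂ v w (Sum.inl a₁) u' * y u')
        = 0 := Finset.sum_eq_zero fun i _ => by simp [hy]
    rw [hL, zero_add]
    refine Finset.sum_congr rfl fun i _ => ?_
    rw [Fintype.sum_sum_type]
    have hL2 : (∑ a₁ : V₁, y (Sum.inr i) * joinMat M₁ M₂ v w (Sum.inr i) (Sum.inl a₁)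
        * y (Sum.inl a₁)) = 0 := Finset.sum_eq_zero fun j _ => by simp [hy]
    rw [hL2, zero_add]
    exact Finset.sum_congr rfl fun j _ => by
      simp only [hy, Sum.elim_inr]
      rfl
  rwa [heq] at this

lemma negdef_del {V : Type} [Fintype V] [DecidableEq V] (M : Matrix V V ℚ) (a : V)
    (h : NegDefQ M) : NegDefQ (delVertMat M a) := by
  intro x hx
  set y : V → ℚ := fun u => if hu : u = a then 0 else x ⟨u, hu⟩ with hy
  have hyv : ∀ i : {u : V // u ≠ a}, y i.val = x i := fun i => by simp [hy, i.2]
  have hy0 : y ≠ 0 := by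
    intro h0
    apply hx
    funext i
    rw [← hyv i, h0]
    rfl
  have := h y hy0
  have heq : ∑ u, ∑ u', y u * M u u' * y u'
      = ∑ i, ∑ j, x i * delVertMat M a i j * x j := by
    have hya : y a = 0 := by simp [hy]
    have h1 : ∀ u : V, ∑ u', y u * M u u' * y u'
        = ∑ j : {u : V // u ≠ a}, y u * M u j.val * x j := by
      intro u
      rw [sum_split a (fun u' => y u * M u u' * y u')]
      rw [hya, mul_zero, zero_add]
      exact Finset.sum_congr rfl fun j _ => by rw [hyv j]
    rw [Finset.sum_congr rfl fun u _ => h1 u,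
      sum_split a (fun u => ∑ j : {u : V // u ≠ a}, y u * M u j.val * x j)]
    have h0 : (∑ j : {u : V // u ≠ a}, y a * M a j.val * x j) = 0 :=
      Finset.sum_eq_zero fun j _ => by rw [hya]; ring
    rw [h0, zero_add]
    refine Finset.sum_congr rfl fun i _ => Finset.sum_congr rfl fun j _ => ?_
    rw [hyv i]
    rfl
  rwa [heq] at this

lemma imat_sym {V : Type} [Fintype V] [DecidableEq V] (G : SimpleGraph V) [DecidableRel G.Adj]
    (e : V → ℚ) (i j : V) : imatQ G.Adj e i j = imatQ G.Adj e j i := by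
  unfold imatQ
  rcases eq_or_ne i j with h | h
  · subst h; rfl
  · rw [if_neg h, if_neg h.symm]
    simp [G.adj_comm i j]

/-- Lemma 2.5, second part: with `Γ = Γ_v ∪_e Γ_w` a connected negative
definite plumbing tree and `r = -det(Γ_w∖w)/det(Γ_w)`, the graph `Γ_v(1/r)` obtained
from `Γ_v` by attaching a new vertex decorated `1/r` to `v` satisfies
`det(Γ_v(1/r)) = det(Γ)/det(Γ_w∖w) > 0`. -/
theorem det_attach_inv {V₁ V₂ : Type} [Fintype V₁] [DecidableEq V₁]
    [Fintype V₂] [DecidableEq V₂]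
    (G₁ : SimpleGraph V₁) [DecidableRel G₁.Adj] (G₂ : SimpleGraph V₂) [DecidableRel G₂.Adj]
    (e₁ : V₁ → ℚ) (e₂ : V₂ → ℚ) (v : V₁) (w : V₂)
    (hT₁ : G₁.IsTree) (hT₂ : G₂.IsTree)
    (hneg : NegDefQ (joinMat (imatQ G₁.Adj e₁) (imatQ G₂.Adj e₂) v w)) :
    detG (attachMat (imatQ G₁.Adj e₁) v
        (1 / (-(detG (delVertMat (imatQ G₂.Adj e₂) w)) / detG (imatQ G₂.Adj e₂))))
      = detG (joinMat (imatQ G₁.Adj e₁) (imatQ G₂.Adj e₂) v w)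
          / detG (delVertMat (imatQ G₂.Adj e₂) w) ∧
    0 < detG (attachMat (imatQ G₁.Adj e₁) v
        (1 / (-(detG (delVertMat (imatQ G₂.Adj e₂) w)) / detG (imatQ G₂.Adj e₂)))) := by
  set M₁ := imatQ G₁.Adj e₁ with hM₁
  set M₂ := imatQ G₂.Adj e₂ with hM₂
  have hsym₁ : ∀ i j, M₁ i j = M₁ j i := imat_sym G₁ e₁
  have hsym₂ : ∀ i j, M₂ i j = M₂ j i := imat_sym G₂ e₂
  have hJsym : ∀ i j, joinMat M₁ M₂ v w i j = joinMat M₁ M₂ v w j i := by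
    intro i j
    rcases i with i | i <;> rcases j with j | j <;>
      simp [joinMat, hsym₁, hsym₂, and_comm]
  have hnd2 : NegDefQ M₂ := negdef_inr M₁ M₂ v w hneg
  have hd2 : 0 < detG M₂ := negdef_det_pos M₂ hsym₂ hnd2
  have hdw : 0 < detG (delVertMat M₂ w) :=
    negdef_det_pos _ (fun i j => hsym₂ i.val j.val) (negdef_del M₂ w hnd2)
  have hdJ : 0 < detG (joinMat M₁ M₂ v w) := negdef_det_pos _ hJsym hneg
  have hx : (1 / (-(detG (delVertMat M₂ w)) / detG M₂)) ≠ 0 :=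
    one_div_ne_zero (div_ne_zero (neg_ne_zero.mpr hdw.ne') hd2.ne')
  have hA := det_attach M₁ v _ hx
  have hJ := det_join M₁ M₂ v w hd2.ne'
  have hEq : detG (attachMat M₁ v (1 / (-(detG (delVertMat M₂ w)) / detG M₂)))
      = detG (joinMat M₁ M₂ v w) / detG (delVertMat M₂ w) := by
    rw [hA, hJ]
    field_simp
  exact ⟨hEq, hEq ▸ div_pos hdJ hdw⟩
end

section
/- Let Γ be a connected negative definite plumbing tree, and let B ⊆ V(Γ) be a set of bad vertices (i.e., replacing the decorations e_v for v ∈ B by sufficiently negative integers yields a rational graph). If Γ' is a connected full subgraph of Γ, then B' := B ∩ V(Γ') is a set of bad vertices for Γ'. In particular m(Γ') ≤ m(Γ), where m denotes the minimal cardinality of a set of bad vertices. -/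
open Matrix BigOperators

/-- `B` is a set of bad vertices: replacing the decorations at `B` by any sufficiently
negative integers yields a rational graph. -/
def IsBadSet {V : Type} [Fintype V] [DecidableEq V] (A : V → V → Prop) [DecidableRel A]
    (e : V → ℤ) (B : Finset V) : Prop :=
  ∃ N : ℤ, ∀ e' : V → ℤ, (∀ v ∈ B, e' v ≤ N) → (∀ v ∉ B, e' v = e v) →
    IsRationalGraph (imatZ A e')

/-- `m(Γ)`: the minimal cardinality of a set of bad vertices. -/
noncomputable def mBad {V : Type} [Fintype V] [DecidableEq V] (A : V → V → Prop)
    [DecidableRel A] (e : V → ℤ) : ℕ :=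
  sInf {n : ℕ | ∃ B : Finset V, IsBadSet A e B ∧ B.card = n}

set_option linter.unusedSectionVars false

namespace BadSetProof

variable {V : Type} [Fintype V] [DecidableEq V]

def bilinB (M : Matrix V V ℤ) (a b : V → ℤ) : ℤ := ∑ v, a v * pairZ M b v

def twoChi (M : Matrix V V ℤ) (l : V → ℤ) : ℤ :=
  (∑ v, l v * (2 + M v v)) - bilinB M l l

def single (u : V) : V → ℤ := fun v => if v = u then 1 else 0

lemma bilinB_eq_double (M : Matrix V V ℤ) (a b : V → ℤ) :
    bilinB M a b = ∑ v, ∑ w, a v * (M v w * b w) := by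
  simp [bilinB, pairZ, Finset.mul_sum]

lemma bilinB_symm {M : Matrix V V ℤ} (hsym : ∀ v w, M v w = M w v) (a b : V → ℤ) :
    bilinB M a b = bilinB M b a := by
  rw [bilinB_eq_double, bilinB_eq_double, Finset.sum_comm]
  refine Finset.sum_congr rfl fun w _ => Finset.sum_congr rfl fun v _ => ?_
  rw [hsym]; ring

lemma pairZ_add (M : Matrix V V ℤ) (a b : V → ℤ) (v : V) :
    pairZ M (fun w => a w + b w) v = pairZ M a v + pairZ M b v := by
  simp [pairZ, mul_add, Finset.sum_add_distrib]

lemma twoChi_add {M : Matrix V V ℤ} (hsym : ∀ v w, M v w = M w v) (a b : V → ℤ) :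
    twoChi M (fun v => a v + b v) = twoChi M a + twoChi M b - 2 * bilinB M a b := by
  have expand : bilinB M (fun v => a v + b v) (fun v => a v + b v)
      = bilinB M a a + bilinB M a b + (bilinB M b a + bilinB M b b) := by
    simp only [bilinB, pairZ_add]
    rw [← Finset.sum_add_distrib, ← Finset.sum_add_distrib, ← Finset.sum_add_distrib]
    exact Finset.sum_congr rfl fun v _ => by ring
  have lin : ∑ v, (a v + b v) * (2 + M v v)
      = ∑ v, a v * (2 + M v v) + ∑ v, b v * (2 + M v v) := by
    rw [← Finset.sum_add_distrib]
    exact Finset.sum_congr rfl fun v _ => by ring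
  unfold twoChi
  rw [lin, expand, bilinB_symm hsym b a]; ring

lemma pairZ_single (M : Matrix V V ℤ) (u v : V) :
    pairZ M (single u) v = M v u := by
  simp [pairZ, single, mul_ite, mul_one, mul_zero]

lemma twoChi_single (M : Matrix V V ℤ) (u : V) : twoChi M (single u) = 2 := by
  unfold twoChi bilinB
  simp only [pairZ_single, single, ite_mul, one_mul, zero_mul]
  rw [Finset.sum_ite_eq' Finset.univ u (fun v => 2 + M v v),
      Finset.sum_ite_eq' Finset.univ u (fun v => M v u)]
  simp

lemma bilinB_single_right {M : Matrix V V ℤ} (hsym : ∀ v w, M v w = M w v) (l : V → ℤ) (u : V) :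
    bilinB M l (single u) = pairZ M l u := by
  unfold bilinB
  simp only [pairZ_single]
  unfold pairZ
  exact Finset.sum_congr rfl fun v _ => by rw [hsym]; ring

lemma twoChi_add_single {M : Matrix V V ℤ} (hsym : ∀ v w, M v w = M w v) (l : V → ℤ) (u : V) :
    twoChi M (fun v => l v + single u v) = twoChi M l + 2 - 2 * pairZ M l u := by
  rw [twoChi_add hsym, twoChi_single, bilinB_single_right hsym]


lemma lt_of_pair_pos {M : Matrix V V ℤ} (hoff : ∀ v w, v ≠ w → 0 ≤ M v w)
    (hdiag : ∀ v, M v v < 0) {Y d : V → ℤ} (hdY : ∀ v, d v ≤ Y v)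
    {u : V} (hYu : pairZ M Y u ≤ 0) (hdu : 0 < pairZ M d u) : d u < Y u := by
  have h1 : ∑ w, M u w * (Y w - d w) < 0 := by
    have h : ∑ w, M u w * (Y w - d w) = pairZ M Y u - pairZ M d u := by
      simp [pairZ, mul_sub, Finset.sum_sub_distrib]
    rw [h]; omega
  rw [← Finset.sum_erase_add _ _ (Finset.mem_univ u)] at h1
  have h2 : 0 ≤ ∑ w ∈ Finset.univ.erase u, M u w * (Y w - d w) :=
    Finset.sum_nonneg fun w hw =>
      mul_nonneg (hoff u w (Ne.symm (Finset.ne_of_mem_erase hw))) (by linarith [hdY w])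
  have h3 : M u u * (Y u - d u) < 0 := by linarith
  by_contra hle
  push_neg at hle
  have : 0 ≤ M u u * (Y u - d u) :=
    mul_nonneg_of_nonpos_of_nonpos (le_of_lt (hdiag u)) (by linarith)
  linarith

lemma climb {M : Matrix V V ℤ} (hsym : ∀ v w, M v w = M w v)
    (hoff : ∀ v w, v ≠ w → 0 ≤ M v w) (hdiag : ∀ v, M v v < 0)
    {Y : V → ℤ} (hYa : ∀ v, pairZ M Y v ≤ 0) :
    ∀ (n : ℕ) (l : V → ℤ), (∀ v, 0 ≤ l v) → (∀ v, l v ≤ Y v) →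
      (∑ v, (Y v - l v).toNat ≤ n) →
      ∃ z : V → ℤ, (∀ v, l v ≤ z v) ∧ (∀ v, z v ≤ Y v) ∧ (∀ v, pairZ M z v ≤ 0) ∧
        twoChi M z ≤ twoChi M l := by
  intro n
  induction n with
  | zero =>
    intro l h0 hlY hm
    have hz : ∀ v, (Y v - l v).toNat = 0 := by
      intro v
      have h1 : ∑ v, (Y v - l v).toNat = 0 := Nat.le_zero.mp hm
      exact (Finset.sum_eq_zero_iff.mp h1) v (Finset.mem_univ v)
    have hl : l = Y := funext fun v => le_antisymm (hlY v) (by have := hz v; omega)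
    exact ⟨l, fun v => le_refl _, hlY, fun v => by rw [hl]; exact hYa v, le_refl _⟩
  | succ n ih =>
    intro l h0 hlY hm
    by_cases ha : ∀ u, pairZ M l u ≤ 0
    · exact ⟨l, fun v => le_refl _, hlY, ha, le_refl _⟩
    · push_neg at ha
      obtain ⟨u, hu⟩ := ha
      have hlt := lt_of_pair_pos hoff hdiag hlY (hYa u) hu
      set l' : V → ℤ := fun v => l v + single u v with hl'
      have hll' : ∀ v, l v ≤ l' v := by
        intro v; simp only [hl', single]; split_ifs <;> omega
      have h0' : ∀ v, 0 ≤ l' v := fun v => le_trans (h0 v) (hll' v)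
      have hlY' : ∀ v, l' v ≤ Y v := by
        intro v; simp only [hl', single]
        by_cases h : v = u
        · subst h; simp; omega
        · simp [h]; exact hlY v
      have hm' : ∑ v, (Y v - l' v).toNat ≤ n := by
        have hlt2 : ∑ v, (Y v - l' v).toNat < ∑ v, (Y v - l v).toNat := by
          apply Finset.sum_lt_sum
          · intro i _
            have := hll' i
            omega
          · refine ⟨u, Finset.mem_univ u, ?_⟩
            have : l' u = l u + 1 := by simp [hl', single]
            omega
        omega
      obtain ⟨z, hz1, hz2, hz3, hz4⟩ := ih l' h0' hlY' hm'
      refine ⟨z, fun v => le_trans (hll' v) (hz1 v), hz2, hz3, ?_⟩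
      have heq : twoChi M l' = twoChi M l + 2 - 2 * pairZ M l u := twoChi_add_single hsym l u
      have : 1 ≤ pairZ M l u := hu
      omega

lemma twoChi_zero (M : Matrix V V ℤ) : twoChi M (0 : V → ℤ) = 0 := by
  simp [twoChi, bilinB, pairZ]

lemma box {M : Matrix V V ℤ} (hsym : ∀ v w, M v w = M w v)
    (hoff : ∀ v w, v ≠ w → 0 ≤ M v w) (hdiag : ∀ v, M v v < 0)
    {Y : V → ℤ} (hY0 : ∀ v, 0 ≤ Y v) (hYa : ∀ v, pairZ M Y v ≤ 0)
    {Zm : V → ℤ} (hZm : IsZmin M Zm) (hrat : 2 ≤ twoChi M Zm) :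
    ∀ d : V → ℤ, (∀ v, 0 ≤ d v) → (∀ v, d v ≤ Y v) → 0 ≤ twoChi M d := by
  classical
  set T : Finset (V → ℤ) := Finset.Icc 0 Y with hT
  have hmemT : ∀ x : V → ℤ, x ∈ T ↔ (∀ v, 0 ≤ x v) ∧ (∀ v, x v ≤ Y v) := by
    intro x; simp [hT, Finset.mem_Icc, Pi.le_def]
  have h0T : (0 : V → ℤ) ∈ T := (hmemT 0).2 ⟨fun v => le_refl _, fun v => hY0 v⟩
  obtain ⟨d0, hd0T, hd0min⟩ := Finset.exists_min_image T (twoChi M) ⟨0, h0T⟩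
  set c := twoChi M d0 with hc
  set T' := T.filter (fun x => twoChi M x = c) with hT'
  obtain ⟨dm, hdT', hdmax⟩ := Finset.exists_max_image T' (fun x => ∑ v, x v)
    ⟨d0, by simp [hT', hd0T, hc]⟩
  have hdT : dm ∈ T := (Finset.mem_filter.mp hdT').1
  have hdc : twoChi M dm = c := (Finset.mem_filter.mp hdT').2
  have hd0 := ((hmemT dm).1 hdT).1
  have hdY := ((hmemT dm).1 hdT).2
  have hanef : ∀ u, pairZ M dm u ≤ 0 := by
    by_contra h; push_neg at h
    obtain ⟨u, hu⟩ := h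
    have hlt := lt_of_pair_pos hoff hdiag hdY (hYa u) hu
    set d' : V → ℤ := fun v => dm v + single u v with hd'
    have hdd' : ∀ v, dm v ≤ d' v := by
      intro v; simp only [hd', single]; split_ifs <;> omega
    have hd'T : d' ∈ T := by
      refine (hmemT d').2 ⟨fun v => le_trans (hd0 v) (hdd' v), ?_⟩
      intro v; simp only [hd', single]
      by_cases h : v = u
      · subst h; simp; omega
      · simp [h]; exact hdY v
    have h2 : twoChi M d' = twoChi M dm + 2 - 2 * pairZ M dm u := twoChi_add_single hsym dm u
    have h3 : twoChi M d' ≤ c := by rw [h2, hdc]; omega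
    have h4 : c ≤ twoChi M d' := hd0min d' hd'T
    have hd'T' : d' ∈ T' := Finset.mem_filter.mpr ⟨hd'T, le_antisymm h3 h4⟩
    have h5 := hdmax d' hd'T'
    have h6 : ∑ v, d' v = (∑ v, dm v) + 1 := by
      simp only [hd']
      rw [Finset.sum_add_distrib]
      have : ∑ v, single u v = 1 := by
        simp [single, Finset.sum_ite_eq' Finset.univ u (fun _ => (1 : ℤ))]
      omega
    omega
  have hc0 : c = 0 := by
    by_cases hd00 : dm = 0
    · rw [← hdc, hd00, twoChi_zero]
    · exfalso
      have hZmd := hZm.2.2.2 dm ⟨hd0, hd00, hanef⟩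
      set d2 : V → ℤ := fun v => dm v - Zm v with hd2
      have hd20 : ∀ v, 0 ≤ d2 v := fun v => by simp only [hd2]; linarith [hZmd v]
      have hd2T : d2 ∈ T := by
        refine (hmemT d2).2 ⟨hd20, fun v => ?_⟩
        simp only [hd2]; linarith [hZm.1 v, hdY v]
      have hsplit : twoChi M dm = twoChi M Zm + twoChi M d2 - 2 * bilinB M Zm d2 := by
        rw [show dm = fun v => Zm v + d2 v from funext fun v => by simp only [hd2]; ring,
          twoChi_add hsym]
      have hbil : bilinB M Zm d2 ≤ 0 := by
        rw [bilinB_symm hsym]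
        refine Finset.sum_nonpos fun v _ => ?_
        have h1 := hd20 v
        have h2 := hZm.2.2.1 v
        nlinarith
      have h6 : c ≤ twoChi M d2 := hd0min d2 hd2T
      have h7 := hdc
      omega
  intro d h1 h2
  have hdT2 : d ∈ T := (hmemT d).2 ⟨h1, h2⟩
  have := hd0min d hdT2
  omega


lemma form_eq_mulVec (M : Matrix V V ℤ) (x : V → ℚ) :
    ∑ v, ∑ w, x v * (M v w : ℚ) * x w
      = ∑ v, x v * (M.map (fun z => (z : ℚ))).mulVec x v := by
  refine Finset.sum_congr rfl fun v _ => ?_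
  simp only [Matrix.mulVec, dotProduct, Matrix.map_apply, Finset.mul_sum]
  exact Finset.sum_congr rfl fun w _ => by ring

lemma mulVec_surj {M : Matrix V V ℤ} (hneg : NegDefZ M) :
    ∀ t : V → ℚ, ∃ x : V → ℚ, (M.map (fun z => (z : ℚ))).mulVec x = t := by
  set Mq : Matrix V V ℚ := M.map (fun z => (z : ℚ)) with hMq
  have hinj : Function.Injective Mq.mulVecLin := by
    intro a b hab
    by_contra hne
    have h1 := hneg (a - b) (sub_ne_zero.mpr hne)
    rw [form_eq_mulVec] at h1
    have h2 : Mq.mulVec (a - b) = 0 := by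
      rw [Matrix.mulVec_sub]
      rw [show Mq.mulVec a = Mq.mulVecLin a from rfl, show Mq.mulVec b = Mq.mulVecLin b from rfl,
        hab]
      simp
    rw [← hMq, h2] at h1
    simp at h1
  have hsurj : Function.Surjective Mq.mulVecLin :=
    LinearMap.injective_iff_surjective.mp hinj
  intro t
  obtain ⟨x, hx⟩ := hsurj t
  exact ⟨x, hx⟩

lemma existsK {M : Matrix V V ℤ} (hneg : NegDefZ M) : ∃ K, IsCanonical M K := by
  obtain ⟨K, hK⟩ := mulVec_surj hneg (fun v => -2 - (M v v : ℚ))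
  refine ⟨K, fun v => ?_⟩
  have := congrFun hK v
  simpa [Matrix.mulVec, dotProduct, Matrix.map_apply] using this

lemma existsY {M : Matrix V V ℤ} (hoff : ∀ v w, v ≠ w → 0 ≤ M v w) (hneg : NegDefZ M) :
    ∃ Y : V → ℤ, (∀ v, 1 ≤ Y v) ∧ (∀ v, pairZ M Y v < 0) := by
  classical
  set Mq : Matrix V V ℚ := M.map (fun z => (z : ℚ)) with hMq
  obtain ⟨x, hx⟩ := mulVec_surj hneg (fun _ => (-1 : ℚ))
  rw [← hMq] at hx
  have hx' : ∀ v, Mq.mulVec x v = -1 := fun v => congrFun hx v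
  set xm : V → ℚ := fun v => max (-(x v)) 0 with hxm
  set xp : V → ℚ := fun v => max (x v) 0 with hxp
  have hxm0 : ∀ v, 0 ≤ xm v := fun v => le_max_right _ _
  have hxp0 : ∀ v, 0 ≤ xp v := fun v => le_max_right _ _
  have hsplit : ∀ v, x v = xp v - xm v := by
    intro v; simp only [hxm, hxp]
    rcases le_total (x v) 0 with h | h
    · rw [max_eq_right h, max_eq_left (by linarith)]; ring
    · rw [max_eq_left h, max_eq_right (by linarith)]; ring
  have hxpxm : ∀ v, xp v * xm v = 0 := by
    intro v; simp only [hxm, hxp]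
    rcases le_total (x v) 0 with h | h
    · rw [max_eq_right h]; ring
    · rw [max_eq_right (by linarith : -(x v) ≤ 0)]; ring
  have hxm_zero : xm = 0 := by
    by_contra h
    have hform_xm : ∑ v, xm v * Mq.mulVec xm v < 0 := by
      have := hneg xm h
      rw [form_eq_mulVec] at this
      rw [hMq]; exact this
    have hA : 0 ≤ ∑ v, xm v * Mq.mulVec xp v := by
      have hrw : ∑ v, xm v * Mq.mulVec xp v = ∑ v, ∑ w, xm v * (Mq v w * xp w) := by
        refine Finset.sum_congr rfl fun v _ => ?_
        simp only [Matrix.mulVec, dotProduct, Finset.mul_sum]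
      rw [hrw]
      refine Finset.sum_nonneg fun v _ => Finset.sum_nonneg fun w _ => ?_
      by_cases hvw : v = w
      · subst hvw
        rw [show xm v * (Mq v v * xp v) = Mq v v * (xp v * xm v) from by ring, hxpxm, mul_zero]
      · refine mul_nonneg (hxm0 v) (mul_nonneg ?_ (hxp0 w))
        simp only [hMq, Matrix.map_apply]
        exact_mod_cast hoff v w hvw
    have hxe : x = fun v => xp v - xm v := funext hsplit
    have hkey : ∑ v, xm v * Mq.mulVec x v
        = (∑ v, xm v * Mq.mulVec xp v) - ∑ v, xm v * Mq.mulVec xm v := by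
      rw [show x = xp - xm from hxe, Matrix.mulVec_sub, ← Finset.sum_sub_distrib]
      exact Finset.sum_congr rfl fun v _ => by simp [Pi.sub_apply]; ring
    have hleft : ∑ v, xm v * Mq.mulVec x v = -∑ v, xm v := by
      rw [← Finset.sum_neg_distrib]
      exact Finset.sum_congr rfl fun v _ => by rw [hx' v]; ring
    have hnn : 0 ≤ ∑ v, xm v := Finset.sum_nonneg fun v _ => hxm0 v
    linarith
  have hx0 : ∀ v, 0 ≤ x v := by
    intro v
    have h1 : xm v = 0 := congrFun hxm_zero v
    have h2 : -(x v) ≤ max (-(x v)) 0 := le_max_left _ _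
    simp only [hxm] at h1
    rw [h1] at h2
    linarith
  have hxpos : ∀ v, 0 < x v := by
    intro v
    rcases lt_or_eq_of_le (hx0 v) with h | h
    · exact h
    · exfalso
      have h1 : Mq.mulVec x v = ∑ w, Mq v w * x w := by
        simp [Matrix.mulVec, dotProduct]
      have h2 : 0 ≤ ∑ w, Mq v w * x w := by
        refine Finset.sum_nonneg fun w _ => ?_
        by_cases hvw : v = w
        · subst hvw; rw [← h]; ring_nf; simp
        · refine mul_nonneg ?_ (hx0 w)
          simp only [hMq, Matrix.map_apply]
          exact_mod_cast hoff v w hvw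
      rw [hx' v] at h1
      linarith
  set n : ℕ := ∏ v, (x v).den with hn
  have hnpos : 0 < n := Finset.prod_pos fun v _ => (x v).pos
  have hint : ∀ v, ∃ k : ℤ, (k : ℚ) = (n : ℚ) * x v := by
    intro v
    obtain ⟨m, hm⟩ : ((x v).den : ℤ) ∣ (n : ℤ) := by
      exact_mod_cast Finset.dvd_prod_of_mem (fun v => (x v).den) (Finset.mem_univ v)
    refine ⟨(x v).num * m, ?_⟩
    have hd : ((x v).den : ℚ) ≠ 0 := by
      exact_mod_cast (x v).den_nz
    have hnq : ((n : ℤ) : ℚ) = ((x v).den : ℚ) * (m : ℚ) := by exact_mod_cast congrArg Int.cast hm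
    have hden : (x v) * ((x v).den : ℚ) = (x v).num := Rat.mul_den_eq_num _
    push_cast at hnq ⊢
    rw [hnq]
    calc ((x v).num : ℚ) * m = (x v) * ((x v).den : ℚ) * m := by rw [hden]
      _ = ((x v).den : ℚ) * m * x v := by ring
  choose Y hY using hint
  refine ⟨Y, ?_, ?_⟩
  · intro v
    have h1 : (0 : ℚ) < (Y v : ℚ) := by
      rw [hY v]
      exact mul_pos (by exact_mod_cast hnpos) (hxpos v)
    have : (0 : ℤ) < Y v := by exact_mod_cast h1
    omega
  · intro v
    have hcast : ((pairZ M Y v : ℤ) : ℚ) = (n : ℚ) * Mq.mulVec x v := by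
      simp only [pairZ]
      push_cast
      rw [show Mq.mulVec x v = ∑ w, Mq v w * x w from by
        simp [Matrix.mulVec, dotProduct], Finset.mul_sum]
      refine Finset.sum_congr rfl fun w _ => ?_
      rw [hY w]
      simp only [hMq, Matrix.map_apply]
      ring
    rw [hx' v] at hcast
    have h2 : ((pairZ M Y v : ℤ) : ℚ) < 0 := by
      rw [hcast]
      have : (0:ℚ) < (n:ℚ) := by exact_mod_cast hnpos
      linarith
    exact_mod_cast h2


lemma imatZ_symm {A : V → V → Prop} [DecidableRel A] (hA : ∀ v w, A v w ↔ A w v) (e : V → ℤ) :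
    ∀ v w, imatZ A e v w = imatZ A e w v := by
  intro v w
  unfold imatZ
  by_cases h : v = w
  · subst h; rfl
  · rw [if_neg h, if_neg (Ne.symm h)]
    by_cases h2 : A v w
    · rw [if_pos h2, if_pos ((hA v w).mp h2)]
    · rw [if_neg h2, if_neg (fun hc => h2 ((hA w v).mp hc))]

lemma imatZ_offdiag_nonneg {A : V → V → Prop} [DecidableRel A] (e : V → ℤ) :
    ∀ v w, v ≠ w → 0 ≤ imatZ A e v w := by
  intro v w h
  unfold imatZ
  rw [if_neg h]
  split_ifs <;> omega

lemma diag_neg {M : Matrix V V ℤ} (hneg : NegDefZ M) (v : V) : M v v < 0 := by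
  have h := hneg (fun w => if w = v then 1 else 0)
    (by intro h; have := congrFun h v; simp at this)
  have hq : ∑ a, ∑ b, (if a = v then (1:ℚ) else 0) * (M a b : ℚ) * (if b = v then 1 else 0)
      = (M v v : ℚ) := by
    rw [Finset.sum_eq_single v]
    · rw [Finset.sum_eq_single v]
      · simp
      · intro b _ hb; simp [hb]
      · intro hb; exact absurd (Finset.mem_univ v) hb
    · intro a _ ha
      simp [ha]
    · intro ha; exact absurd (Finset.mem_univ v) ha
  rw [hq] at h
  exact_mod_cast h

lemma negdef_mono {A : V → V → Prop} [DecidableRel A] {e e' : V → ℤ}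
    (hle : ∀ v, e' v ≤ e v) (hneg : NegDefZ (imatZ A e)) : NegDefZ (imatZ A e') := by
  intro x hx
  have h0 := hneg x hx
  have key : ∑ v, ∑ w, x v * (imatZ A e' v w : ℚ) * x w
      = (∑ v, ∑ w, x v * (imatZ A e v w : ℚ) * x w) + ∑ v, ((e' v : ℚ) - e v) * x v ^ 2 := by
    rw [← Finset.sum_add_distrib]
    refine Finset.sum_congr rfl fun v _ => ?_
    have hsplit : ∀ w, x v * (imatZ A e' v w : ℚ) * x w
        = x v * (imatZ A e v w : ℚ) * x w
          + (if v = w then ((e' v : ℚ) - e v) * x v ^ 2 else 0) := by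
      intro w
      by_cases h : v = w
      · subst h; simp only [imatZ, if_pos rfl, if_true]; push_cast; ring
      · simp [imatZ, h]
    rw [Finset.sum_congr rfl fun w _ => hsplit w, Finset.sum_add_distrib,
      Finset.sum_ite_eq Finset.univ v (fun _ => ((e' v : ℚ) - e v) * x v ^ 2)]
    simp
  rw [key]
  have h2 : ∑ v, ((e' v : ℚ) - e v) * x v ^ 2 ≤ 0 := by
    refine Finset.sum_nonpos fun v _ => ?_
    have h3 : ((e' v : ℚ) - e v) ≤ 0 := by
      have := hle v; push_cast; linarith [(show ((e' v : ℚ)) ≤ (e v : ℚ) from by exact_mod_cast this)]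
    nlinarith [sq_nonneg (x v)]
  linarith

lemma pos_of_antinef {G : SimpleGraph V} [DecidableRel G.Adj] {e : V → ℤ}
    (hpre : G.Preconnected) {z : V → ℤ} (h0 : ∀ v, 0 ≤ z v) (hz : z ≠ 0)
    (ha : ∀ v, pairZ (imatZ G.Adj e) z v ≤ 0) : ∀ v, 1 ≤ z v := by
  obtain ⟨u, hu⟩ : ∃ u, z u ≠ 0 := by
    by_contra h; push_neg at h; exact hz (funext h)
  have hu' : 0 < z u := lt_of_le_of_ne (h0 u) (Ne.symm hu)
  have step : ∀ a b, G.Adj a b → 0 < z a → 0 < z b := by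
    intro a b hab hza
    by_contra hzb
    have hzb0 : z b = 0 := le_antisymm (not_lt.mp hzb) (h0 b)
    have hpos : 0 < pairZ (imatZ G.Adj e) z b := by
      unfold pairZ
      refine Finset.sum_pos' ?_ ⟨a, Finset.mem_univ a, ?_⟩
      · intro w _
        by_cases hw : w = b
        · subst hw; rw [hzb0, mul_zero]
        · exact mul_nonneg (imatZ_offdiag_nonneg e b w (Ne.symm hw)) (h0 w)
      · have hba : G.Adj b a := hab.symm
        have h1 : imatZ G.Adj e b a = 1 := by
          unfold imatZ
          rw [if_neg hba.ne, if_pos hba]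
        rw [h1, one_mul]; exact hza
    exact absurd (ha b) (not_le.mpr hpos)
  have walkpos : ∀ {a b : V} (_ : G.Walk a b), 0 < z a → 0 < z b := by
    intro a b p
    induction p with
    | nil => exact id
    | cons h p ih => exact fun hza => ih (step _ _ h hza)
  intro v
  obtain ⟨p⟩ := hpre u v
  have := walkpos p hu'
  omega

lemma existsZmin {M : Matrix V V ℤ} [Nonempty V] (hoff : ∀ v w, v ≠ w → 0 ≤ M v w)
    (hpos : ∀ x : V → ℤ, (∀ v, 0 ≤ x v) → x ≠ 0 → (∀ v, pairZ M x v ≤ 0) → ∀ v, 1 ≤ x v)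
    {Y : V → ℤ} (hY1 : ∀ v, 1 ≤ Y v) (hYa : ∀ v, pairZ M Y v ≤ 0) :
    ∃ Z, IsZmin M Z := by
  classical
  set A : Set (V → ℤ) := {x | (∀ v, 0 ≤ x v) ∧ x ≠ 0 ∧ ∀ v, pairZ M x v ≤ 0} with hA
  have hYA : Y ∈ A := by
    refine ⟨fun v => by linarith [hY1 v], ?_, hYa⟩
    intro h
    have := congrFun h (Classical.arbitrary V)
    have h2 := hY1 (Classical.arbitrary V)
    simp only [Pi.zero_apply] at this
    omega
  set Sv : V → Set ℕ := fun v => {k | ∃ x, x ∈ A ∧ (x v).toNat = k} with hSv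
  have hSvne : ∀ v, ((Y v).toNat) ∈ Sv v := fun v => ⟨Y, hYA, rfl⟩
  set Z : V → ℤ := fun v => ((sInf (Sv v) : ℕ) : ℤ) with hZ
  have hwit : ∀ v, ∃ x, x ∈ A ∧ x v = Z v := by
    intro v
    obtain ⟨x, hx, hxv⟩ := Nat.sInf_mem ⟨_, hSvne v⟩
    refine ⟨x, hx, ?_⟩
    rw [hZ]
    simp only
    rw [← hxv]
    exact (Int.toNat_of_nonneg (hx.1 v)).symm
  have hlb : ∀ x ∈ A, ∀ v, Z v ≤ x v := by
    intro x hx v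
    have h1 : sInf (Sv v) ≤ (x v).toNat := Nat.sInf_le ⟨x, hx, rfl⟩
    calc Z v ≤ ((x v).toNat : ℤ) := by
          rw [hZ]; simp only; exact_mod_cast h1
      _ = x v := Int.toNat_of_nonneg (hx.1 v)
  have hZ0 : ∀ v, 0 ≤ Z v := fun v => by rw [hZ]; positivity
  have hZ1 : ∀ v, 1 ≤ Z v := by
    intro v
    obtain ⟨x, hx, hxv⟩ := hwit v
    rw [← hxv]
    exact hpos x hx.1 hx.2.1 hx.2.2 v
  have hZa : ∀ v, pairZ M Z v ≤ 0 := by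
    intro v
    obtain ⟨x, hx, hxv⟩ := hwit v
    calc pairZ M Z v ≤ pairZ M x v := by
          unfold pairZ
          refine Finset.sum_le_sum fun w _ => ?_
          by_cases hw : w = v
          · subst hw; rw [hxv]
          · exact mul_le_mul_of_nonneg_left (hlb x hx w) (hoff v w (Ne.symm hw))
      _ ≤ 0 := hx.2.2 v
  have hZne : Z ≠ 0 := by
    intro h
    have := congrFun h (Classical.arbitrary V)
    have h2 := hZ1 (Classical.arbitrary V)
    simp only [Pi.zero_apply] at this
    omega
  exact ⟨Z, hZ0, hZne, hZa, fun Z' hZ' v => hlb Z' ⟨hZ'.1, hZ'.2.1, hZ'.2.2⟩ v⟩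

lemma chi_eq_twoChi {M : Matrix V V ℤ} (hsym : ∀ v w, M v w = M w v)
    {K : V → ℚ} (hK : IsCanonical M K) (l : V → ℤ) :
    chi M K (fun v => (l v : ℚ)) = (twoChi M l : ℚ) / 2 := by
  unfold chi
  have h1 : ∑ v, ∑ w, (K v + (l v : ℚ)) * (M v w : ℚ) * (l w : ℚ)
      = (∑ v, ∑ w, K v * (M v w : ℚ) * (l w : ℚ))
        + ∑ v, ∑ w, (l v : ℚ) * (M v w : ℚ) * (l w : ℚ) := by
    rw [← Finset.sum_add_distrib]
    refine Finset.sum_congr rfl fun v _ => ?_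
    rw [← Finset.sum_add_distrib]
    exact Finset.sum_congr rfl fun w _ => by ring
  have h2 : ∑ v, ∑ w, K v * (M v w : ℚ) * (l w : ℚ)
      = ∑ w, (l w : ℚ) * (-2 - (M w w : ℚ)) := by
    rw [Finset.sum_comm]
    refine Finset.sum_congr rfl fun w _ => ?_
    have h : ∑ v, K v * (M v w : ℚ) * (l w : ℚ) = (l w : ℚ) * ∑ v, (M w v : ℚ) * K v := by
      rw [Finset.mul_sum]
      refine Finset.sum_congr rfl fun v _ => ?_
      rw [hsym w v]; ring
    rw [h, hK w]
  have h3 : ∑ v, ∑ w, (l v : ℚ) * (M v w : ℚ) * (l w : ℚ) = ((bilinB M l l : ℤ) : ℚ) := by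
    rw [bilinB_eq_double]
    push_cast
    exact Finset.sum_congr rfl fun v _ => Finset.sum_congr rfl fun w _ => by ring
  rw [h1, h2, h3]
  have h4 : ∑ w, (l w : ℚ) * (-2 - (M w w : ℚ)) = -((∑ v, l v * (2 + M v v) : ℤ) : ℚ) := by
    push_cast
    rw [← Finset.sum_neg_distrib]
    exact Finset.sum_congr rfl fun w _ => by ring
  rw [h4]
  unfold twoChi
  push_cast
  ring


lemma rational_restrict (M' : Matrix V V ℤ)
    (hsym' : ∀ v w, M' v w = M' w v) (hoff' : ∀ v w, v ≠ w → 0 ≤ M' v w)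
    (hdiag' : ∀ v, M' v v < 0)
    (S : Finset V) (hS : S.Nonempty)
    (M'' : Matrix {v // v ∈ S} {v // v ∈ S} ℤ)
    (hMM : ∀ a b : {v // v ∈ S}, M'' a b = M' a.1 b.1)
    (Y : V → ℤ) (hY1 : ∀ v, 1 ≤ Y v) (hYa : ∀ v, pairZ M' Y v ≤ 0)
    (Zm : V → ℤ) (hZm : IsZmin M' Zm) (h2chi : 2 ≤ twoChi M' Zm) :
    IsRationalGraph M'' := by
  classical
  intro Z'' K'' hZmin'' hK''
  have hY0 : ∀ v, 0 ≤ Y v := fun v => by linarith [hY1 v]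
  have hsym'' : ∀ a b, M'' a b = M'' b a := fun a b => by rw [hMM, hMM, hsym']
  -- sum conversion lemmas
  have hsum_eq : ∀ f : V → ℤ, (∀ v ∉ S, f v = 0) →
      ∑ a : {v // v ∈ S}, f a.1 = ∑ v, f v := by
    intro f hf
    rw [← Finset.sum_subtype (p := fun v => v ∈ S) S (fun _ => Iff.rfl) f]
    exact Finset.sum_subset (Finset.subset_univ S) (fun v _ hv => hf v hv)
  have hsum_le : ∀ f : V → ℤ, (∀ v ∉ S, 0 ≤ f v) →
      ∑ a : {v // v ∈ S}, f a.1 ≤ ∑ v, f v := by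
    intro f hf
    rw [← Finset.sum_subtype (p := fun v => v ∈ S) S (fun _ => Iff.rfl) f]
    exact Finset.sum_le_sum_of_subset_of_nonneg (Finset.subset_univ S) (fun v _ hv => hf v hv)
  -- the restriction of Y to S is anti-nef for M''
  have hYsub : ∀ a : {v // v ∈ S}, pairZ M'' (fun b => Y b.1) a ≤ 0 := by
    intro a
    have h1 : pairZ M'' (fun b => Y b.1) a = ∑ b : {v // v ∈ S}, M' a.1 b.1 * Y b.1 := by
      unfold pairZ
      exact Finset.sum_congr rfl fun b _ => by rw [hMM]
    have h2 : ∑ b : {v // v ∈ S}, M' a.1 b.1 * Y b.1 ≤ ∑ v, M' a.1 v * Y v := by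
      refine hsum_le (fun v => M' a.1 v * Y v) fun v hv => ?_
      have hne : a.1 ≠ v := fun h => hv (h ▸ a.2)
      exact mul_nonneg (hoff' a.1 v hne) (hY0 v)
    calc pairZ M'' (fun b => Y b.1) a ≤ ∑ v, M' a.1 v * Y v := by rw [h1]; exact h2
      _ = pairZ M' Y a.1 := rfl
      _ ≤ 0 := hYa a.1
  obtain ⟨s0, hs0⟩ := hS
  have hYsubne : (fun b : {v // v ∈ S} => Y b.1) ≠ 0 := by
    intro h
    have := congrFun h ⟨s0, hs0⟩
    simp only [Pi.zero_apply] at this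
    have := hY1 s0
    omega
  have hZY : ∀ a : {v // v ∈ S}, Z'' a ≤ Y a.1 :=
    hZmin''.2.2.2 (fun b => Y b.1) ⟨fun b => hY0 b.1, hYsubne, hYsub⟩
  -- extension of Z'' by zero
  set l0 : V → ℤ := fun v => if h : v ∈ S then Z'' ⟨v, h⟩ else 0 with hl0
  have hl0S : ∀ a : {v // v ∈ S}, l0 a.1 = Z'' a := by
    intro a
    simp only [hl0, a.2, dif_pos]
  have hl0nS : ∀ v ∉ S, l0 v = 0 := by
    intro v hv; simp only [hl0, hv, dif_neg, not_false_iff]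
  have hl00 : ∀ v, 0 ≤ l0 v := by
    intro v
    by_cases h : v ∈ S
    · simp only [hl0, h, dif_pos]; exact hZmin''.1 _
    · rw [hl0nS v h]
  have hl0Y : ∀ v, l0 v ≤ Y v := by
    intro v
    by_cases h : v ∈ S
    · simp only [hl0, h, dif_pos]; exact hZY ⟨v, h⟩
    · rw [hl0nS v h]; exact hY0 v
  -- pairings agree
  have hpair : ∀ a : {v // v ∈ S}, pairZ M'' Z'' a = pairZ M' l0 a.1 := by
    intro a
    unfold pairZ
    rw [← hsum_eq (fun w => M' a.1 w * l0 w) (fun v hv => by show M' a.1 v * l0 v = 0; rw [hl0nS v hv, mul_zero])]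
    exact Finset.sum_congr rfl fun b _ => by rw [hMM, hl0S]
  have htc : twoChi M'' Z'' = twoChi M' l0 := by
    unfold twoChi bilinB
    have hA : ∑ a : {v // v ∈ S}, Z'' a * (2 + M'' a a) = ∑ v, l0 v * (2 + M' v v) := by
      rw [← hsum_eq (fun v => l0 v * (2 + M' v v)) (fun v hv => by show l0 v * (2 + M' v v) = 0; rw [hl0nS v hv, zero_mul])]
      exact Finset.sum_congr rfl fun a _ => by rw [hMM, hl0S]
    have hB2 : ∑ a : {v // v ∈ S}, Z'' a * pairZ M'' Z'' a = ∑ v, l0 v * pairZ M' l0 v := by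
      rw [← hsum_eq (fun v => l0 v * pairZ M' l0 v) (fun v hv => by show l0 v * pairZ M' l0 v = 0; rw [hl0nS v hv, zero_mul])]
      exact Finset.sum_congr rfl fun a _ => by rw [hpair, hl0S]
    rw [hA, hB2]
  -- climb to an anti-nef cycle above l0
  obtain ⟨z, hz1, hz2, hz3, hz4⟩ :=
    climb hsym' hoff' hdiag' hYa (∑ v, (Y v - l0 v).toNat) l0 hl00 hl0Y (le_refl _)
  obtain ⟨a0, ha0⟩ : ∃ a, Z'' a ≠ 0 := by
    by_contra h; push_neg at h; exact hZmin''.2.1 (funext h)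
  have hzne : z ≠ 0 := by
    intro h
    have h1 : 0 < l0 a0.1 := by
      rw [hl0S a0]; exact lt_of_le_of_ne (hZmin''.1 a0) (Ne.symm ha0)
    have h2 := hz1 a0.1
    rw [h, Pi.zero_apply] at h2
    omega
  -- compare with Zmin
  have hZmz : ∀ v, Zm v ≤ z v :=
    hZm.2.2.2 z ⟨fun v => le_trans (hl00 v) (hz1 v), hzne, hz3⟩
  set d : V → ℤ := fun v => z v - Zm v with hd
  have hd0 : ∀ v, 0 ≤ d v := fun v => by simp only [hd]; linarith [hZmz v]
  have hdY : ∀ v, d v ≤ Y v := fun v => by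
    simp only [hd]; linarith [hz2 v, hZm.1 v]
  have hsplit : twoChi M' z = twoChi M' Zm + twoChi M' d - 2 * bilinB M' Zm d := by
    rw [show z = fun v => Zm v + d v from funext fun v => by simp only [hd]; ring,
      twoChi_add hsym']
  have hbil : bilinB M' Zm d ≤ 0 := by
    rw [bilinB_symm hsym']
    refine Finset.sum_nonpos fun v _ => ?_
    have h1 := hd0 v
    have h2 := hZm.2.2.1 v
    nlinarith
  have hdchi := box hsym' hoff' hdiag' hY0 hYa hZm h2chi d hd0 hdY
  have hfinal : 2 ≤ twoChi M'' Z'' := by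
    rw [htc]
    have hzchi : 2 ≤ twoChi M' z := by omega
    omega
  rw [chi_eq_twoChi hsym'' hK'']
  have h : (2 : ℚ) ≤ (twoChi M'' Z'' : ℚ) := by exact_mod_cast hfinal
  linarith


lemma keyBad (G : SimpleGraph V) [DecidableRel G.Adj] (e : V → ℤ)
    (hpre : G.Preconnected) (hneg : NegDefZ (imatZ G.Adj e))
    (S : Finset V) (hS : S.Nonempty) (B : Finset V) (hB : IsBadSet G.Adj e B) :
    IsBadSet (fun a b : {v // v ∈ S} => G.Adj a b) (fun a => e a) (B.subtype (· ∈ S)) := by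
  classical
  obtain ⟨N, hN⟩ := hB
  obtain ⟨s0, hs0⟩ := hS
  haveI hVne : Nonempty V := ⟨s0⟩
  refine ⟨min N (Finset.univ.inf' Finset.univ_nonempty e), ?_⟩
  intro e'' he''B he''nB
  set e' : V → ℤ := fun v => if h : v ∈ S then e'' ⟨v, h⟩ else if v ∈ B then min N (e v) else e v
    with he'
  have he'S : ∀ (v : V) (h : v ∈ S), e' v = e'' ⟨v, h⟩ := by
    intro v h; simp only [he', h, dif_pos]
  have hinf_le : ∀ v, Finset.univ.inf' Finset.univ_nonempty e ≤ e v :=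
    fun v => Finset.inf'_le e (Finset.mem_univ v)
  have he'le : ∀ v, e' v ≤ e v := by
    intro v
    by_cases h : v ∈ S
    · rw [he'S v h]
      by_cases hb : (⟨v, h⟩ : {x // x ∈ S}) ∈ B.subtype (· ∈ S)
      · exact le_trans (he''B _ hb) (le_trans (min_le_right _ _) (hinf_le v))
      · exact le_of_eq (he''nB _ hb)
    · simp only [he', h, dif_neg, not_false_iff]
      split_ifs
      · exact min_le_right _ _
      · exact le_refl _
  have hBcond : ∀ v ∈ B, e' v ≤ N := by
    intro v hv
    by_cases h : v ∈ S
    · rw [he'S v h]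
      have hb : (⟨v, h⟩ : {x // x ∈ S}) ∈ B.subtype (· ∈ S) := Finset.mem_subtype.mpr hv
      exact le_trans (he''B _ hb) (min_le_left _ _)
    · simp only [he', h, dif_neg, not_false_iff, hv, if_pos]
      exact min_le_left _ _
  have hnBcond : ∀ v ∉ B, e' v = e v := by
    intro v hv
    by_cases h : v ∈ S
    · rw [he'S v h]
      exact he''nB _ (fun hc => hv (Finset.mem_subtype.mp hc))
    · simp only [he', h, dif_neg, not_false_iff, hv, if_neg]
  have hrat := hN e' hBcond hnBcond
  set M' : Matrix V V ℤ := imatZ G.Adj e' with hM'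
  have hneg' : NegDefZ M' := negdef_mono he'le hneg
  have hsym' : ∀ v w, M' v w = M' w v := imatZ_symm (fun v w => G.adj_comm v w) e'
  have hoff' : ∀ v w, v ≠ w → 0 ≤ M' v w := imatZ_offdiag_nonneg e'
  have hdiag' : ∀ v, M' v v < 0 := fun v => diag_neg hneg' v
  obtain ⟨Y, hY1, hYa'⟩ := existsY hoff' hneg'
  have hYa : ∀ v, pairZ M' Y v ≤ 0 := fun v => le_of_lt (hYa' v)
  have hposcond : ∀ x : V → ℤ, (∀ v, 0 ≤ x v) → x ≠ 0 → (∀ v, pairZ M' x v ≤ 0) →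
      ∀ v, 1 ≤ x v := fun x h1 h2 h3 => pos_of_antinef hpre h1 h2 h3
  obtain ⟨Zm, hZm⟩ := existsZmin hoff' hposcond hY1 hYa
  obtain ⟨K', hK'⟩ := existsK hneg'
  have h2chiZm : 2 ≤ twoChi M' Zm := by
    have h := hrat Zm K' hZm hK'
    rw [chi_eq_twoChi hsym' hK'] at h
    have h2 : (2 : ℚ) ≤ (twoChi M' Zm : ℚ) := by linarith
    exact_mod_cast h2
  refine rational_restrict M' hsym' hoff' hdiag' S ⟨s0, hs0⟩ _ ?_ Y hY1 hYa Zm hZm h2chiZm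
  intro a b
  rw [hM']
  unfold imatZ
  by_cases h : a = b
  · subst h
    rw [if_pos rfl, if_pos rfl, he'S a.1 a.2]
  · have h2 : a.1 ≠ b.1 := fun hc => h (Subtype.ext hc)
    rw [if_neg h, if_neg h2]

end BadSetProof

/-- Lemma 2.1: if `B` is a set of bad vertices of `Γ` and `Γ'` is a
connected full subgraph, then `B ∩ V(Γ')` is a set of bad vertices of `Γ'`;
in particular `m(Γ') ≤ m(Γ)`. -/
theorem badSet_subgraph {V : Type} [Fintype V] [DecidableEq V]
    (G : SimpleGraph V) [DecidableRel G.Adj] (e : V → ℤ)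
    (htree : G.IsTree) (hneg : NegDefZ (imatZ G.Adj e))
    (S : Finset V) (hS : S.Nonempty)
    (hconn : (G.induce (↑S : Set V)).Connected)
    (B : Finset V) (hB : IsBadSet G.Adj e B) :
    IsBadSet (fun a b : {v // v ∈ S} => G.Adj a b) (fun a => e a) (B.subtype (· ∈ S)) ∧
    mBad (fun a b : {v // v ∈ S} => G.Adj a b) (fun a => e a) ≤ mBad G.Adj e := by
  have hpre := htree.isConnected.preconnected
  constructor
  · exact BadSetProof.keyBad G e hpre hneg S hS B hB
  · have hne : {n : ℕ | ∃ B' : Finset V, IsBadSet G.Adj e B' ∧ B'.card = n}.Nonempty :=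
      ⟨B.card, B, hB, rfl⟩
    obtain ⟨B0, hB0, hB0c⟩ := Nat.sInf_mem hne
    unfold mBad
    have hkey := BadSetProof.keyBad G e hpre hneg S hS B0 hB0
    refine le_trans (Nat.sInf_le ⟨B0.subtype (· ∈ S), hkey, rfl⟩) ?_
    calc (B0.subtype (· ∈ S)).card = (B0.filter (· ∈ S)).card := Finset.card_subtype _ _
      _ ≤ B0.card := Finset.card_filter_le _ _
      _ = _ := hB0c
end
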